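/- Let σ(m,n) denote the arithmetic-geometric mean and V(D,d) = −1/σ(D,d) for D, d > 0 (mass normalized to 1). Then ∂V/∂D = ((χ − 1)/D)·V(D,d) and ∂V/∂d = −(χ/d)·V(D,d), where χ = Σ_{n=1}^{∞} (1/2ⁿ)·(d_{n−1}/D_n)·Π_{j=1}^{n−1}(1 − d_{j−1}/D_j), with D₀ = D, d₀ = d, D_n = (D_{n−1} + d_{n−1})/2, d_n = √(D_{n−1} d_{n−1}). -/

import Mathlib

open Real Filter
open Topology

/-- One step of the arithmetic-geometric mean iteration. -/
noncomputable def agmStep (p : ℝ × ℝ) : ℝ × ℝ :=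
  ((p.1 + p.2) / 2, Real.sqrt (p.1 * p.2))

/-- `Dseq D d n = D_n`, the `n`-th arithmetic term of the AGM iteration started at `(D, d)`. -/
noncomputable def Dseq (D d : ℝ) (n : ℕ) : ℝ := (agmStep^[n] (D, d)).1

/-- `dseq D d n = d_n`, the `n`-th geometric term of the AGM iteration started at `(D, d)`. -/
noncomputable def dseq (D d : ℝ) (n : ℕ) : ℝ := (agmStep^[n] (D, d)).2

/-- The arithmetic-geometric mean `σ(D,d)`. -/
noncomputable def agm (D d : ℝ) : ℝ := limUnder atTop (Dseq D d)

/-- The potential `V(D,d) = -1/σ(D,d)` (mass normalized to `1`). -/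
noncomputable def Vagm (D d : ℝ) : ℝ := -1 / agm D d

/-- `χ = Σ_{n≥1} 2⁻ⁿ (d_{n-1}/D_n) Π_{j=1}^{n-1} (1 - d_{j-1}/D_j)`. -/
noncomputable def chi (D d : ℝ) : ℝ :=
  ∑' n : ℕ, (1 / 2 ^ (n + 1)) * (dseq D d n / Dseq D d (n + 1)) *
    ∏ j ∈ Finset.range n, (1 - dseq D d j / Dseq D d (j + 1))

/-! ### Auxiliary definitions -/

/-- Summand of the series defining `chi`. -/
noncomputable def gk (D d : ℝ) (k : ℕ) : ℝ :=
  (1 / 2 ^ (k + 1)) * (dseq D d k / Dseq D d (k + 1)) *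
    ∏ j ∈ Finset.range k, (1 - dseq D d j / Dseq D d (j + 1))

/-- Partial sums of the `chi` series: the derivative of `D_n` w.r.t. `d` is `D_n · Ssum n / d`. -/
noncomputable def Ssum (D d : ℝ) (n : ℕ) : ℝ := ∑ k ∈ Finset.range n, gk D d k

/-- Error term: the derivative of `d_n` w.r.t. `d` is `d_n · (Ssum n + Ee n) / d`. -/
noncomputable def Ee (D d : ℝ) (n : ℕ) : ℝ :=
  (1 / 2 ^ n) * ∏ j ∈ Finset.range n, (1 - dseq D d j / Dseq D d (j + 1))

/-! ### Basic recursion and bounds -/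

lemma Dseq_zero (D d : ℝ) : Dseq D d 0 = D := rfl
lemma dseq_zero (D d : ℝ) : dseq D d 0 = d := rfl

lemma Dseq_succ (D d : ℝ) (n : ℕ) : Dseq D d (n+1) = (Dseq D d n + dseq D d n) / 2 := by
  simp [Dseq, dseq, Function.iterate_succ_apply', agmStep]

lemma dseq_succ (D d : ℝ) (n : ℕ) : dseq D d (n+1) = Real.sqrt (Dseq D d n * dseq D d n) := by
  simp [Dseq, dseq, Function.iterate_succ_apply', agmStep]

lemma Dseq_pos {D d : ℝ} (hD : 0 < D) (hd : 0 < d) (n : ℕ) : 0 < Dseq D d n ∧ 0 < dseq D d n := by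
  induction n with
  | zero => exact ⟨hD, hd⟩
  | succ n ih =>
    refine ⟨by rw [Dseq_succ]; linarith [ih.1, ih.2], ?_⟩
    rw [dseq_succ]
    exact Real.sqrt_pos.2 (mul_pos ih.1 ih.2)

lemma dseq_le_Dseq {D d : ℝ} (hD : 0 < D) (hd : 0 < d) (n : ℕ) :
    dseq D d (n+1) ≤ Dseq D d (n+1) := by
  obtain ⟨h1, h2⟩ := Dseq_pos hD hd n
  rw [dseq_succ, Dseq_succ]
  rw [show Dseq D d n * dseq D d n
      = ((Dseq D d n + dseq D d n)/2)^2 - ((Dseq D d n - dseq D d n)/2)^2 by ring]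
  calc Real.sqrt (((Dseq D d n + dseq D d n)/2)^2 - ((Dseq D d n - dseq D d n)/2)^2)
      ≤ Real.sqrt (((Dseq D d n + dseq D d n)/2)^2) := by
        apply Real.sqrt_le_sqrt; nlinarith [sq_nonneg ((Dseq D d n - dseq D d n)/2)]
    _ = (Dseq D d n + dseq D d n)/2 := Real.sqrt_sq (by linarith)

lemma seq_bounds {D d : ℝ} (hD : 0 < D) (hd : 0 < d) (n : ℕ) :
    min D d ≤ Dseq D d n ∧ Dseq D d n ≤ max D d ∧ min D d ≤ dseq D d n ∧ dseq D d n ≤ max D d := by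
  induction n with
  | zero =>
    simp [Dseq_zero, dseq_zero, min_le_iff, le_max_iff, le_refl]
  | succ n ih =>
    obtain ⟨h1, h2, h3, h4⟩ := ih
    have hm : 0 < min D d := lt_min hD hd
    refine ⟨by rw [Dseq_succ]; linarith, by rw [Dseq_succ]; linarith, ?_, ?_⟩
    · rw [dseq_succ, show min D d = Real.sqrt (min D d * min D d) by
        rw [Real.sqrt_mul_self hm.le]]
      exact Real.sqrt_le_sqrt (by nlinarith)
    · rw [dseq_succ, show max D d = Real.sqrt (max D d * max D d) by
        rw [Real.sqrt_mul_self (le_max_of_le_left hD.le)]]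
      exact Real.sqrt_le_sqrt (by nlinarith)

lemma dseq_mono {D d : ℝ} (hD : 0 < D) (hd : 0 < d) (n : ℕ) :
    dseq D d (n+1) ≤ dseq D d (n+2) := by
  have h := dseq_le_Dseq hD hd n
  have h2 := (Dseq_pos hD hd (n+1)).2
  rw [dseq_succ D d (n+1)]
  exact (Real.le_sqrt h2.le (by nlinarith [(Dseq_pos hD hd (n+1)).1])).2 (by nlinarith)

lemma Dseq_anti {D d : ℝ} (hD : 0 < D) (hd : 0 < d) (n : ℕ) :
    Dseq D d (n+2) ≤ Dseq D d (n+1) := by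
  have h := dseq_le_Dseq hD hd n
  rw [Dseq_succ]; linarith

lemma gap_le {D d : ℝ} (hD : 0 < D) (hd : 0 < d) (n : ℕ) :
    Dseq D d (n+1) - dseq D d (n+1) ≤ (1/2)^n * max D d := by
  induction n with
  | zero =>
    have := (seq_bounds hD hd 1).2.1
    have := (Dseq_pos hD hd 1).2
    simp only [pow_zero, one_mul]; linarith
  | succ n ih =>
    have h1 := dseq_mono hD hd n
    have h2 : Dseq D d (n+2) - dseq D d (n+1) = (Dseq D d (n+1) - dseq D d (n+1))/2 := by
      rw [Dseq_succ]; ring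
    have : Dseq D d (n+2) - dseq D d (n+2) ≤ (Dseq D d (n+1) - dseq D d (n+1))/2 := by
      linarith
    calc Dseq D d (n+2) - dseq D d (n+2) ≤ (Dseq D d (n+1) - dseq D d (n+1))/2 := this
      _ ≤ ((1/2)^n * max D d)/2 := by linarith
      _ = (1/2)^(n+1) * max D d := by ring

/-! ### Convergence -/

lemma agm_tendsto {D d : ℝ} (hD : 0 < D) (hd : 0 < d) :
    Tendsto (Dseq D d) atTop (𝓝 (agm D d)) := by
  have hanti : Antitone (fun n => Dseq D d (n+1)) := by
    apply antitone_nat_of_succ_le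
    intro n; exact Dseq_anti hD hd n
  have hbdd : BddBelow (Set.range fun n => Dseq D d (n+1)) := by
    refine ⟨min D d, ?_⟩
    rintro x ⟨n, rfl⟩
    exact (seq_bounds hD hd (n+1)).1
  have h1 : Tendsto (fun n => Dseq D d (n+1)) atTop (𝓝 (⨅ n, Dseq D d (n+1))) :=
    tendsto_atTop_ciInf hanti hbdd
  have h2 : Tendsto (Dseq D d) atTop (𝓝 (⨅ n, Dseq D d (n+1))) :=
    (tendsto_add_atTop_iff_nat 1).1 h1
  rw [agm, h2.limUnder_eq]; exact h2

lemma agm_sandwich {D d : ℝ} (hD : 0 < D) (hd : 0 < d) (n : ℕ) :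
    dseq D d (n+1) ≤ agm D d ∧ agm D d ≤ Dseq D d (n+1) := by
  have ht := agm_tendsto hD hd
  constructor
  · refine ge_of_tendsto ht ?_
    filter_upwards [eventually_ge_atTop (n+1)] with m hm
    rcases Nat.exists_eq_add_of_le hm with ⟨k, rfl⟩
    calc dseq D d (n+1) ≤ dseq D d (n+1+k) := by
          clear hm
          induction k with
          | zero => exact le_refl _
          | succ k ih =>
            refine le_trans ih ?_
            have := dseq_mono hD hd (n+k)
            rw [show n+1+(k+1) = n+k+2 by omega, show n+1+k = n+k+1 by omega]; exact this
      _ ≤ Dseq D d (n+1+k) := by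
          have := dseq_le_Dseq hD hd (n+k)
          convert this using 2 <;> omega
  · refine le_of_tendsto ht ?_
    filter_upwards [eventually_ge_atTop (n+1)] with m hm
    rcases Nat.exists_eq_add_of_le hm with ⟨k, rfl⟩
    clear hm
    induction k with
    | zero => exact le_refl _
    | succ k ih =>
      refine le_trans ?_ ih
      have := Dseq_anti hD hd (n+k)
      rw [show n+1+(k+1) = n+k+2 by omega, show n+1+k = n+k+1 by omega]; exact this

lemma agm_pos {D d : ℝ} (hD : 0 < D) (hd : 0 < d) : 0 < agm D d := by
  have h := (agm_sandwich hD hd 0).1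
  have := (seq_bounds hD hd 1).2.2.1
  have : 0 < min D d := lt_min hD hd
  linarith [(seq_bounds hD hd 1).2.2.1]

lemma agm_le_max {D d : ℝ} (hD : 0 < D) (hd : 0 < d) : agm D d ≤ max D d := by
  have h := (agm_sandwich hD hd 0).2
  linarith [(seq_bounds hD hd 1).2.1]

/-! ### Homogeneity -/

lemma seq_smul {c : ℝ} (hc : 0 ≤ c) (D d : ℝ) (n : ℕ) :
    Dseq (c*D) (c*d) n = c * Dseq D d n ∧ dseq (c*D) (c*d) n = c * dseq D d n := by
  induction n with
  | zero => exact ⟨rfl, rfl⟩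
  | succ n ih =>
    constructor
    · rw [Dseq_succ, Dseq_succ, ih.1, ih.2]; ring
    · rw [dseq_succ, dseq_succ, ih.1, ih.2,
        show c * Dseq D d n * (c * dseq D d n) = c^2 * (Dseq D d n * dseq D d n) by ring,
        Real.sqrt_mul (by positivity), Real.sqrt_sq hc]

lemma agm_smul {c D d : ℝ} (hc : 0 < c) (hD : 0 < D) (hd : 0 < d) :
    agm (c*D) (c*d) = c * agm D d := by
  have h : Tendsto (Dseq (c*D) (c*d)) atTop (𝓝 (c * agm D d)) := by
    have := (agm_tendsto hD hd).const_mul c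
    refine this.congr fun n => ?_
    exact (seq_smul hc.le D d n).1.symm
  rw [agm, h.limUnder_eq]

/-! ### Series bounds -/

lemma ratio_bounds {D d : ℝ} (hD : 0 < D) (hd : 0 < d) (k : ℕ) :
    0 < dseq D d k / Dseq D d (k+1) ∧ dseq D d k / Dseq D d (k+1) ≤ 2 := by
  obtain ⟨hDk, hdk⟩ := Dseq_pos hD hd k
  have hD1 := (Dseq_pos hD hd (k+1)).1
  constructor
  · positivity
  · rw [div_le_iff₀ hD1, Dseq_succ]; linarith

lemma prod_abs_le_one {D d : ℝ} (hD : 0 < D) (hd : 0 < d) (n : ℕ) :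
    |∏ j ∈ Finset.range n, (1 - dseq D d j / Dseq D d (j+1))| ≤ 1 := by
  rw [Finset.abs_prod]
  apply Finset.prod_le_one
  · intro j _; exact abs_nonneg _
  · intro j _
    obtain ⟨h1, h2⟩ := ratio_bounds hD hd j
    rw [abs_le]; constructor <;> linarith

lemma gk_bound {D d : ℝ} (hD : 0 < D) (hd : 0 < d) (k : ℕ) : |gk D d k| ≤ (1/2)^k := by
  obtain ⟨h1, h2⟩ := ratio_bounds hD hd k
  have h3 := prod_abs_le_one hD hd k
  rw [gk, abs_mul, abs_mul]
  have e1 : |(1:ℝ) / 2 ^ (k+1)| = (1/2)^(k+1) := by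
    rw [abs_of_pos (by positivity)]; rw [div_pow]; norm_num
  rw [e1, abs_of_pos h1]
  calc (1/2:ℝ)^(k+1) * (dseq D d k / Dseq D d (k+1)) * |∏ j ∈ Finset.range k, (1 - dseq D d j / Dseq D d (j+1))|
      ≤ (1/2:ℝ)^(k+1) * 2 * 1 := by
        apply mul_le_mul (by apply mul_le_mul_of_nonneg_left h2 (by positivity)) h3 (abs_nonneg _) (by positivity)
    _ = (1/2)^k := by rw [pow_succ]; ring

lemma summable_gk {D d : ℝ} (hD : 0 < D) (hd : 0 < d) : Summable (gk D d) := by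
  apply Summable.of_norm_bounded
    (summable_geometric_of_lt_one (by norm_num : (0:ℝ) ≤ 1/2) (by norm_num))
  intro k
  simpa using gk_bound hD hd k

lemma chi_eq_tsum (D d : ℝ) : chi D d = ∑' k, gk D d k := rfl

lemma Ssum_tendsto {D d : ℝ} (hD : 0 < D) (hd : 0 < d) :
    Tendsto (Ssum D d) atTop (𝓝 (chi D d)) := by
  rw [chi_eq_tsum]
  exact (summable_gk hD hd).hasSum.tendsto_sum_nat

lemma Ssum_abs_le {D d : ℝ} (hD : 0 < D) (hd : 0 < d) (n : ℕ) : |Ssum D d n| ≤ 2 := by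
  calc |Ssum D d n| ≤ ∑ k ∈ Finset.range n, |gk D d k| := Finset.abs_sum_le_sum_abs _ _
    _ ≤ ∑ k ∈ Finset.range n, (1/2:ℝ)^k := Finset.sum_le_sum (fun k _ => gk_bound hD hd k)
    _ ≤ ∑' k, (1/2:ℝ)^k := by
        apply Summable.sum_le_tsum _ (fun k _ => by positivity)
          (summable_geometric_of_lt_one (by norm_num) (by norm_num))
    _ = 2 := tsum_geometric_two

lemma chi_sub_Ssum {D d : ℝ} (hD : 0 < D) (hd : 0 < d) (n : ℕ) :
    |chi D d - Ssum D d n| ≤ 2 * (1/2)^n := by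
  have hsum := summable_gk hD hd
  have h1 : chi D d - Ssum D d n = ∑' k, gk D d (k + n) := by
    rw [chi_eq_tsum, Ssum, sub_eq_iff_eq_add', ← Summable.sum_add_tsum_nat_add n hsum]
  rw [h1]
  have hg : Summable (fun k : ℕ => (1/2:ℝ)^(k+n)) := by
    apply Summable.comp_injective (summable_geometric_of_lt_one (one_div_nonneg.2 zero_le_two) (by norm_num))
    exact fun a b h => by omega
  have hs : Summable (fun k => ‖gk D d (k+n)‖) := by
    apply Summable.of_nonneg_of_le (fun _ => norm_nonneg _) (fun k => by simpa using gk_bound hD hd (k+n)) hg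
  calc ‖∑' k, gk D d (k + n)‖ ≤ ∑' k, ‖gk D d (k+n)‖ := norm_tsum_le_tsum_norm hs
    _ ≤ ∑' k : ℕ, (1/2:ℝ)^(k+n) := Summable.tsum_le_tsum (fun k => by simpa using gk_bound hD hd (k+n)) hs hg
    _ = 2 * (1/2)^n := by
        simp_rw [pow_add]
        rw [tsum_mul_right, tsum_geometric_two]

/-! ### Derivatives of the iterates -/

lemma Ssum_zero (D d : ℝ) : Ssum D d 0 = 0 := by simp [Ssum]
lemma Ee_zero (D d : ℝ) : Ee D d 0 = 1 := by simp [Ee]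
lemma Ssum_succ (D d : ℝ) (n : ℕ) : Ssum D d (n+1) = Ssum D d n + gk D d n := by
  simp [Ssum, Finset.sum_range_succ]
lemma Ee_succ (D d : ℝ) (n : ℕ) :
    Ee D d (n+1) = (1/2) * Ee D d n * (1 - dseq D d n / Dseq D d (n+1)) := by
  simp only [Ee, Finset.prod_range_succ, pow_succ]
  ring

lemma hasDeriv_seq (D : ℝ) (hD : 0 < D) (n : ℕ) {x : ℝ} (hx : 0 < x) :
    HasDerivAt (fun y => Dseq D y n) (Dseq D x n * Ssum D x n / x) x ∧
    HasDerivAt (fun y => dseq D y n) (dseq D x n * (Ssum D x n + Ee D x n) / x) x := by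
  induction n with
  | zero =>
    constructor
    · simp only [Dseq_zero, Ssum_zero, mul_zero, zero_div]
      exact hasDerivAt_const x D
    · simp only [dseq_zero, Ssum_zero, Ee_zero, zero_add, mul_one]
      rw [div_self hx.ne']
      exact hasDerivAt_id x
  | succ n ih =>
    obtain ⟨hA, hB⟩ := ih
    obtain ⟨hDn, hdn⟩ := Dseq_pos hD hx n
    have hD1 := (Dseq_pos hD hx (n+1)).1
    constructor
    · have h := (hA.add hB).div_const 2
      have heq : (fun y => Dseq D y (n+1)) = fun y => (Dseq D y n + dseq D y n)/2 :=
        funext fun y => Dseq_succ D y n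
      rw [heq]
      refine h.congr_deriv ?_
      rw [Ssum_succ, gk, Ee]
      rw [Dseq_succ D x n] at hD1 ⊢
      field_simp
      ring
    · have hne : Dseq D x n * dseq D x n ≠ 0 := (mul_pos hDn hdn).ne'
      have h := (hA.mul hB).sqrt hne
      have heq : (fun y => dseq D y (n+1)) = fun y => Real.sqrt (Dseq D y n * dseq D y n) :=
        funext fun y => dseq_succ D y n
      rw [heq]
      refine h.congr_deriv ?_
      have he : dseq D x (n+1) = Real.sqrt (Dseq D x n * dseq D x n) := dseq_succ D x n
      have he2 : dseq D x (n+1) * dseq D x (n+1) = Dseq D x n * dseq D x n := by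
        rw [he]; exact Real.mul_self_sqrt (mul_pos hDn hdn).le
      have hepos := (Dseq_pos hD hx (n+1)).2
      simp only [Pi.mul_apply]
      rw [← he]
      rw [Ssum_succ, Ee_succ, gk]
      have hP : ∏ j ∈ Finset.range n, (1 - dseq D x j / Dseq D x (j+1)) = 2^n * Ee D x n := by
        rw [Ee]; field_simp
      rw [hP]
      field_simp
      linear_combination (-(Ssum D x n * Dseq D x (n + 1) * 2 ^ n * 4 + Ee D x n * Dseq D x (n + 1) * 2 ^ n * 2)) * he2

lemma chi_abs_le {D d : ℝ} (hD : 0 < D) (hd : 0 < d) : |chi D d| ≤ 2 := by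
  rw [chi_eq_tsum]
  have hg : Summable (fun k : ℕ => (1/2:ℝ)^k) :=
    summable_geometric_of_lt_one (by norm_num) (by norm_num)
  have hs : Summable (fun k => ‖gk D d k‖) :=
    Summable.of_nonneg_of_le (fun _ => norm_nonneg _) (fun k => by simpa using gk_bound hD hd k) hg
  calc |∑' k, gk D d k| ≤ ∑' k, ‖gk D d k‖ := norm_tsum_le_tsum_norm hs
    _ ≤ ∑' k : ℕ, (1/2:ℝ)^k := Summable.tsum_le_tsum (fun k => by simpa using gk_bound hD hd k) hs hg
    _ = 2 := tsum_geometric_two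

lemma hasDerivAt_agm_d {D d : ℝ} (hD : 0 < D) (hd : 0 < d) :
    HasDerivAt (fun x => agm D x) (agm D d * chi D d / d) d := by
  set s : Set ℝ := Set.Ioo (d/2) (d+1) with hs_def
  have hmem : ∀ x ∈ s, 0 < x := fun x hx => lt_trans (by linarith) hx.1
  set M0 : ℝ := max D (d+1) with hM0_def
  have hM0 : 0 < M0 := lt_max_of_lt_left hD
  -- key uniform bound
  have key : ∀ n : ℕ, ∀ x ∈ s, |agm D x * chi D x / x - Dseq D x (n+1) * Ssum D x (n+1) / x|
      ≤ (6 * M0 / d) * (1/2)^n := by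
    intro n x hxs
    have hx := hmem x hxs
    have hmax : max D x ≤ M0 := max_le_max le_rfl (le_of_lt hxs.2)
    have hD1 : agm D x ≤ Dseq D x (n+1) := (agm_sandwich hD hx n).2
    have hd1 : dseq D x (n+1) ≤ agm D x := (agm_sandwich hD hx n).1
    have hgap : Dseq D x (n+1) - dseq D x (n+1) ≤ (1/2)^n * M0 :=
      le_trans (gap_le hD hx n) (by nlinarith [pow_pos (by norm_num : (0:ℝ) < 1/2) n])
    have hDle : Dseq D x (n+1) ≤ M0 := le_trans (seq_bounds hD hx (n+1)).2.1 hmax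
    have hDge : 0 < Dseq D x (n+1) := (Dseq_pos hD hx (n+1)).1
    have hchi : |chi D x| ≤ 2 := chi_abs_le hD hx
    have htail : |chi D x - Ssum D x (n+1)| ≤ (1/2)^n := by
      have := chi_sub_Ssum hD hx (n+1)
      calc |chi D x - Ssum D x (n+1)| ≤ 2 * (1/2)^(n+1) := this
        _ = (1/2)^n := by rw [pow_succ]; ring
    have split : agm D x * chi D x - Dseq D x (n+1) * Ssum D x (n+1)
        = (agm D x - Dseq D x (n+1)) * chi D x
          + Dseq D x (n+1) * (chi D x - Ssum D x (n+1)) := by ring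
    have habs : |agm D x * chi D x - Dseq D x (n+1) * Ssum D x (n+1)|
        ≤ (1/2)^n * M0 * 2 + M0 * (1/2)^n := by
      rw [split]
      calc |(agm D x - Dseq D x (n+1)) * chi D x
            + Dseq D x (n+1) * (chi D x - Ssum D x (n+1))|
          ≤ |agm D x - Dseq D x (n+1)| * |chi D x|
            + |Dseq D x (n+1)| * |chi D x - Ssum D x (n+1)| := by
            refine le_trans (abs_add_le _ _) ?_
            rw [abs_mul, abs_mul]
        _ ≤ ((1/2)^n * M0) * 2 + M0 * ((1/2)^n) := by
            apply add_le_add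
            · apply mul_le_mul _ hchi (abs_nonneg _) (by positivity)
              rw [abs_sub_comm, abs_of_nonneg (by linarith)]
              linarith
            · apply mul_le_mul _ htail (abs_nonneg _) hM0.le
              rw [abs_of_pos hDge]; exact hDle
    rw [div_sub_div_same, abs_div, abs_of_pos hx]
    rw [div_le_iff₀ hx] at *
    calc |agm D x * chi D x - Dseq D x (n+1) * Ssum D x (n+1)|
        ≤ (1/2)^n * M0 * 2 + M0 * (1/2)^n := habs
      _ = 3 * M0 * (1/2)^n := by ring
      _ ≤ (6 * M0 / d) * (1/2)^n * x := by
          have h2 : d / 2 ≤ x := le_of_lt hxs.1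
          have := pow_pos (by norm_num : (0:ℝ) < 1/2) n
          rw [div_mul_eq_mul_div, div_mul_eq_mul_div, le_div_iff₀ hd]
          nlinarith
  -- uniform convergence
  have hunif : TendstoUniformlyOn (fun n x => Dseq D x n * Ssum D x n / x)
      (fun x => agm D x * chi D x / x) atTop s := by
    rw [Metric.tendstoUniformlyOn_iff]
    intro ε hε
    have hlim : Tendsto (fun n : ℕ => (6 * M0 / d) * (1/2)^n) atTop (𝓝 0) := by
      have := tendsto_pow_atTop_nhds_zero_of_lt_one (by norm_num : (0:ℝ) ≤ 1/2) (by norm_num)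
      simpa using this.const_mul (6 * M0 / d)
    have hev : ∀ᶠ n : ℕ in atTop, (6 * M0 / d) * (1/2)^n < ε :=
      hlim.eventually (eventually_lt_nhds hε)
    rw [eventually_atTop] at hev ⊢
    obtain ⟨N, hN⟩ := hev
    refine ⟨N+1, fun n hn x hxs => ?_⟩
    obtain ⟨m, rfl⟩ : ∃ m, n = m + 1 := ⟨n-1, by omega⟩
    rw [Real.dist_eq]
    calc |agm D x * chi D x / x - Dseq D x (m+1) * Ssum D x (m+1) / x|
        ≤ (6 * M0 / d) * (1/2)^m := key m x hxs
      _ < ε := hN m (by omega)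
  have hd_mem : d ∈ s := ⟨by linarith, by linarith⟩
  have hf : ∀ᶠ n : ℕ in atTop, ∀ x : ℝ, x ∈ s →
      HasDerivAt (fun y => Dseq D y n) (Dseq D x n * Ssum D x n / x) x :=
    Filter.Eventually.of_forall fun n x hxs => (hasDeriv_seq D hD n (hmem x hxs)).1
  have hfg : ∀ x : ℝ, x ∈ s → Tendsto (fun n => Dseq D x n) atTop (𝓝 (agm D x)) :=
    fun x hxs => agm_tendsto hD (hmem x hxs)
  have := hasDerivAt_of_tendstoUniformlyOn isOpen_Ioo hunif hf hfg hd_mem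
  simpa using this

theorem partial_derivs_of_V (D d : ℝ) (hD : 0 < D) (hd : 0 < d) :
    HasDerivAt (fun D' => Vagm D' d) ((chi D d - 1) / D * Vagm D d) D ∧
    HasDerivAt (fun d' => Vagm D d') (-(chi D d / d) * Vagm D d) d := by
  have hσ := agm_pos hD hd
  have h1 := hasDerivAt_agm_d hD hd
  constructor
  · -- D-partial, via homogeneity
    have hφD : d * D / D = d := by field_simp
    have hφ : HasDerivAt (fun D' : ℝ => d * D / D') (-(d * D) / D^2) D := by
      have h2 := (hasDerivAt_inv hD.ne').const_mul (d * D)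
      have hfe : (fun D' : ℝ => d * D / D') = fun y => d * D * y⁻¹ := by
        funext y; rw [div_eq_mul_inv]
      rw [hfe]
      refine h2.congr_deriv ?_
      field_simp
    have h1' : HasDerivAt (fun x => agm D x) (agm D d * chi D d / d) (d * D / D) := by
      rwa [hφD]
    have h3 : HasDerivAt (fun D' => agm D (d * D / D'))
        (agm D d * chi D d / d * (-(d * D) / D^2)) D := h1'.comp D hφ
    have h4 : HasDerivAt (fun D' => D' / D * agm D (d * D / D'))
        (1 / D * agm D (d * D / D) + D / D * (agm D d * chi D d / d * (-(d * D) / D^2))) D := by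
      have hid : HasDerivAt (fun D' : ℝ => D' / D) (1 / D) D := by
        simpa using (hasDerivAt_id D).div_const D
      exact hid.mul h3
    have hev : (fun D' => agm D' d) =ᶠ[𝓝 D] (fun D' => D' / D * agm D (d * D / D')) := by
      filter_upwards [eventually_gt_nhds hD] with D' hD'
      have hc : 0 < D' / D := div_pos hD' hD
      have hdd : 0 < d * D / D' := by positivity
      have := agm_smul hc hD hdd
      rw [show D' / D * D = D' by field_simp, show D' / D * (d * D / D') = d by field_simp] at this
      exact this
    have h5 : HasDerivAt (fun D' => agm D' d)
        (1 / D * agm D (d * D / D) + D / D * (agm D d * chi D d / d * (-(d * D) / D^2))) D :=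
      h4.congr_of_eventuallyEq hev
    have h6 := (h5.inv hσ.ne').neg
    have heq : (fun D' : ℝ => Vagm D' d) = fun D' => -(agm D' d)⁻¹ := by
      funext y; rw [Vagm]; ring
    rw [heq]
    refine h6.congr_deriv ?_
    rw [hφD, Vagm]
    field_simp
    ring
  · have h6 := (h1.inv hσ.ne').neg
    have heq : (fun d' : ℝ => Vagm D d') = fun x => -(agm D x)⁻¹ := by
      funext y; rw [Vagm]; ring
    rw [heq]
    refine h6.congr_deriv ?_
    rw [Vagm]
    field_simp
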